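/- Let T be a commutative ring, R a T-algebra, n ≥ 1, and K = T(n,R) the algebra of upper triangular n×n matrices over R. Let φ be a T-algebra automorphism of K that maps the set of strictly upper triangular matrices onto itself (a triangular automorphism). Then there exist an invertible element u of K and a T-algebra automorphism α of R such that φ(A) = u · ᾱ(A) · u⁻¹ for all A ∈ K, where ᾱ(A) is the matrix obtained from A by applying α to every entry. In other words, every triangular automorphism of T(n,R) is a product of an inner automorphism and a ring automorphism. -/

import Mathlib

/-- The `T`-subalgebra of upper triangular `n × n` matrices over `R`. -/
def triangularSubalgebra (T R : Type*) [CommRing T] [Ring R] [Algebra T R] (n : ℕ) :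
    Subalgebra T (Matrix (Fin n) (Fin n) R) where
  carrier := {A | ∀ ⦃i j : Fin n⦄, j < i → A i j = 0}
  add_mem' := fun {A B} hA hB i j hij => by
    simp [Matrix.add_apply, hA hij, hB hij]
  mul_mem' := fun {A B} hA hB i j hij => by
    simp only [Matrix.mul_apply]
    refine Finset.sum_eq_zero fun k _ => ?_
    rcases lt_or_ge k i with h | h
    · rw [hA h, zero_mul]
    · rw [hB (lt_of_lt_of_le hij h), mul_zero]
  algebraMap_mem' := fun t i j hij => by
    simp [Matrix.algebraMap_matrix_apply, (ne_of_lt hij).symm]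

/-- The set of strictly upper triangular matrices inside the triangular matrix algebra. -/
def strictlyUpper (T R : Type*) [CommRing T] [Ring R] [Algebra T R] (n : ℕ) :
    Set (triangularSubalgebra T R n) :=
  {A | ∀ i j : Fin n, j ≤ i → (A : Matrix (Fin n) (Fin n) R) i j = 0}

/-- The entrywise action of an automorphism `α` of `R` on the triangular matrix algebra. -/
def entrywiseMap (T R : Type*) [CommRing T] [Ring R] [Algebra T R] (n : ℕ)
    (α : R ≃ₐ[T] R) (A : triangularSubalgebra T R n) : triangularSubalgebra T R n :=
  ⟨Matrix.of fun i j => α ((A : Matrix (Fin n) (Fin n) R) i j),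
    fun i j hij => by simp [Matrix.of_apply, A.2 hij]⟩

namespace Stmt7Aux

variable {T R : Type*} [CommRing T] [Ring R] [Algebra T R] {n : ℕ}

/-- single entry matrix in the triangular algebra (forced to 0 below diagonal). -/
def sing (p q : Fin n) (r : R) : triangularSubalgebra T R n :=
  ⟨Matrix.single p q (if p ≤ q then r else 0), by
    intro i j hij
    simp only [Matrix.single, Matrix.of_apply]
    split_ifs with h h2
    · exact absurd (h.1 ▸ h.2 ▸ h2) (not_le.mpr hij)
    · rfl
    · rfl⟩

lemma sing_apply (p q : Fin n) (r : R) (a b : Fin n) :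
    (sing p q r : triangularSubalgebra T R n).val a b
      = if p = a ∧ q = b ∧ p ≤ q then r else 0 := by
  simp only [sing, Matrix.single, Matrix.of_apply]
  split_ifs with h1 h2 h3 h4 <;> tauto

lemma sing_val_of_le {p q : Fin n} (h : p ≤ q) (r : R) :
    (sing p q r : triangularSubalgebra T R n).val = Matrix.single p q r := by
  simp [sing, if_pos h]

lemma sing_of_not_le {p q : Fin n} (h : ¬ p ≤ q) (r : R) :
    (sing p q r : triangularSubalgebra T R n) = 0 := by
  apply Subtype.ext
  simp [sing, if_neg h]

@[simp] lemma sing_zero (p q : Fin n) : (sing p q (0:R) : triangularSubalgebra T R n) = 0 := by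
  apply Subtype.ext
  simp [sing]

lemma sing_mul_sing {p q s : Fin n} (hpq : p ≤ q) (hqs : q ≤ s) (r t : R) :
    (sing p q r : triangularSubalgebra T R n) * sing q s t = sing p s (r * t) := by
  apply Subtype.ext
  rw [MulMemClass.coe_mul, sing_val_of_le hpq, sing_val_of_le hqs,
    sing_val_of_le (hpq.trans hqs), Matrix.single_mul_single_same]

lemma sing_mul_sing_ne {p q q' s : Fin n} (h : q ≠ q') (r t : R) :
    (sing p q r : triangularSubalgebra T R n) * sing q' s t = 0 := by
  by_cases h1 : p ≤ q
  · by_cases h2 : q' ≤ s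
    · apply Subtype.ext
      rw [MulMemClass.coe_mul, ZeroMemClass.coe_zero, sing_val_of_le h1, sing_val_of_le h2]
      exact Matrix.single_mul_single_of_ne r p q q' h t
    · rw [sing_of_not_le h2, mul_zero]
  · rw [sing_of_not_le h1, zero_mul]

lemma eq_sum_sing (A : triangularSubalgebra T R n) :
    A = ∑ p : Fin n, ∑ q : Fin n, sing p q (A.val p q) := by
  apply Subtype.ext
  ext a b
  rw [AddSubmonoidClass.coe_finset_sum, Matrix.sum_apply]
  simp only [AddSubmonoidClass.coe_finset_sum, Matrix.sum_apply, sing_apply]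
  rw [Finset.sum_eq_single a]
  · rw [Finset.sum_eq_single b]
    · by_cases hab : a ≤ b
      · simp [hab]
      · simp only [hab, and_false, if_false]
        exact A.2 (not_le.mp hab)
    · intro q _ hq; simp [hq]
    · intro h; exact absurd (Finset.mem_univ b) h
  · intro p _ hp
    apply Finset.sum_eq_zero; intro q _; simp [hp]
  · intro h; exact absurd (Finset.mem_univ a) h

end Stmt7Aux

namespace Stmt7Aux

variable {T R : Type*} [CommRing T] [Ring R] [Algebra T R] {n : ℕ}

/-- `A` vanishes below the `k`-th superdiagonal. -/
def lvl (k : ℕ) (A : triangularSubalgebra T R n) : Prop :=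
  ∀ p q : Fin n, (q : ℕ) < (p : ℕ) + k → A.val p q = 0

lemma lvl_zero (A : triangularSubalgebra T R n) : lvl 0 A := by
  intro p q h
  exact A.2 (by rwa [Fin.lt_def, ← Nat.add_zero (p:ℕ)])

lemma lvl_mono {a b : ℕ} (h : a ≤ b) {A : triangularSubalgebra T R n} (hA : lvl b A) :
    lvl a A := fun p q hpq => hA p q (by omega)

lemma lvl_mul {a b : ℕ} {A B : triangularSubalgebra T R n} (hA : lvl a A) (hB : lvl b B) :
    lvl (a + b) (A * B) := by
  intro p q h
  rw [MulMemClass.coe_mul, Matrix.mul_apply]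
  refine Finset.sum_eq_zero fun m _ => ?_
  rcases lt_or_ge (m : ℕ) ((p : ℕ) + a) with hm | hm
  · rw [hA p m hm, zero_mul]
  · rw [hB m q (by omega), mul_zero]

lemma lvl_sum {k : ℕ} {ι : Type*} {s : Finset ι} {f : ι → triangularSubalgebra T R n}
    (h : ∀ i ∈ s, lvl k (f i)) : lvl k (∑ i ∈ s, f i) := by
  intro p q hpq
  rw [AddSubmonoidClass.coe_finset_sum, Matrix.sum_apply]
  exact Finset.sum_eq_zero fun i hi => h i hi p q hpq

lemma lvl_sing {k : ℕ} {p q : Fin n} (h : (p : ℕ) + k ≤ (q : ℕ)) (r : R) :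
    lvl k (sing p q r : triangularSubalgebra T R n) := by
  intro a b hab
  rw [sing_apply]
  apply if_neg
  rintro ⟨rfl, rfl, -⟩
  omega

lemma lvl_zero_elt {k : ℕ} (_p _q : Fin n) : lvl k (0 : triangularSubalgebra T R n) := by
  intro a b _
  rfl

lemma mem_strictlyUpper_iff_lvl_one {A : triangularSubalgebra T R n} :
    A ∈ strictlyUpper T R n ↔ lvl 1 A := by
  constructor
  · intro h p q hpq
    exact h p q (by rw [Fin.le_def]; omega)
  · intro h p q hpq
    exact h p q (by rw [Fin.le_def] at hpq; omega)

lemma lvl_eq_zero {A : triangularSubalgebra T R n} (h : lvl n A) : A = 0 := by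
  apply Subtype.ext
  ext p q
  rw [h p q (by have := q.isLt; omega)]
  rfl

lemma lvl_map (ψ : triangularSubalgebra T R n →ₐ[T] triangularSubalgebra T R n)
    (hψ : ∀ A ∈ strictlyUpper T R n, ψ A ∈ strictlyUpper T R n) :
    ∀ (k : ℕ) (A : triangularSubalgebra T R n), lvl k A → lvl k (ψ A) := by
  intro k
  induction k with
  | zero => intro A _; exact lvl_zero _
  | succ k ih =>
    intro A hA
    have hre : ψ A = ∑ p : Fin n, ∑ q : Fin n, ψ (sing p q (A.val p q)) := by
      conv_lhs => rw [eq_sum_sing A]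
      rw [map_sum]
      refine Finset.sum_congr rfl fun p _ => ?_
      rw [map_sum]
    rw [hre]
    refine lvl_sum fun p _ => lvl_sum fun q _ => ?_
    by_cases hq : (q : ℕ) < (p : ℕ) + (k + 1)
    · rw [hA p q hq, sing_zero, map_zero]
      exact lvl_zero_elt p q

    · push_neg at hq
      have hp1 : (p : ℕ) + 1 < n := by have := q.isLt; omega
      set m : Fin n := ⟨(p : ℕ) + 1, hp1⟩ with hm
      have hpm : p ≤ m := by rw [Fin.le_def]; simp [hm]
      have hmq : m ≤ q := by rw [Fin.le_def]; simp only [hm]; omega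
      have hsplit : sing p q (A.val p q) = sing p m (A.val p q) * (sing m q 1 : triangularSubalgebra T R n) := by
        rw [sing_mul_sing hpm hmq, mul_one]
      rw [hsplit, map_mul]
      have h1 : lvl 1 (ψ (sing p m (A.val p q))) := by
        rw [← mem_strictlyUpper_iff_lvl_one]
        apply hψ
        rw [mem_strictlyUpper_iff_lvl_one]
        exact lvl_sing (by simp [hm]) _
      have h2 : lvl k (ψ (sing m q 1)) := ih _ (lvl_sing (by simp only [hm]; omega) _)
      rw [show k + 1 = 1 + k by omega]
      exact lvl_mul h1 h2

end Stmt7Aux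

namespace Stmt7Aux

variable {T R : Type*} [CommRing T] [Ring R] [Algebra T R] {n : ℕ}

/-- diagonal of a product is the product of diagonals. -/
lemma diag_mul (A B : triangularSubalgebra T R n) (k : Fin n) :
    (A * B).val k k = A.val k k * B.val k k := by
  rw [MulMemClass.coe_mul, Matrix.mul_apply]
  rw [Finset.sum_eq_single k]
  · intro m _ hm
    rcases lt_or_gt_of_ne hm with h | h
    · rw [A.2 h, zero_mul]
    · rw [B.2 h, mul_zero]
  · intro h; exact absurd (Finset.mem_univ k) h

def E (i : Fin n) : triangularSubalgebra T R n := sing i i 1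

lemma E_mul_E_self (i : Fin n) : (E i : triangularSubalgebra T R n) * E i = E i := by
  rw [E, sing_mul_sing le_rfl le_rfl, mul_one]

lemma E_mul_E_ne {i j : Fin n} (h : i ≠ j) :
    (E i : triangularSubalgebra T R n) * E j = 0 :=
  sing_mul_sing_ne h 1 1

lemma sum_E : (∑ i : Fin n, E i : triangularSubalgebra T R n) = 1 := by
  apply Subtype.ext
  ext a b
  rw [AddSubmonoidClass.coe_finset_sum, Matrix.sum_apply]
  simp only [E, sing_apply]
  rw [Finset.sum_eq_single a]
  · by_cases hab : a = b
    · subst hab; simp [Matrix.one_apply]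
    · simp [Matrix.one_apply, hab]
  · intro i _ hi; simp [hi]
  · intro h; exact absurd (Finset.mem_univ a) h

lemma E_sandwich (i j : Fin n) (A : triangularSubalgebra T R n) :
    (E i : triangularSubalgebra T R n) * A * E j = sing i j (A.val i j) := by
  apply Subtype.ext
  ext a b
  rw [MulMemClass.coe_mul, MulMemClass.coe_mul, sing_apply]
  rw [E, E, sing_val_of_le le_rfl, sing_val_of_le le_rfl]
  by_cases hb : b = j
  · subst hb
    rw [Matrix.mul_single_apply_same, mul_one]
    by_cases ha : a = i
    · subst ha
      rw [Matrix.single_mul_apply_same, one_mul]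
      by_cases hij : a ≤ b
      · rw [if_pos ⟨rfl, rfl, hij⟩]
      · rw [if_neg (by tauto), A.2 (not_le.mp hij)]
    · rw [Matrix.single_mul_apply_of_ne (h := ha)]
      rw [if_neg (by tauto)]
  · rw [Matrix.mul_single_apply_of_ne (hbj := hb)]
    rw [if_neg (by tauto)]

section Main

variable [NeZero n]

/-- triple product entry lemma. -/
lemma triple_apply (A B C : triangularSubalgebra T R n) (k : Fin n) (hB : lvl (k : ℕ) B) :
    (A * B * C).val 0 k = A.val 0 0 * B.val 0 k * C.val k k := by
  rw [MulMemClass.coe_mul, Matrix.mul_apply, Finset.sum_eq_single k]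
  · rw [MulMemClass.coe_mul, Matrix.mul_apply, Finset.sum_eq_single (0 : Fin n)]
    · intro p _ hp
      rw [hB p k (by simp only [ne_eq, Fin.ext_iff, Fin.val_zero] at hp; omega), mul_zero]
    · intro h; exact absurd (Finset.mem_univ _) h
  · intro q _ hq
    rcases lt_or_gt_of_ne hq with h | h
    · -- q < k : (A*B).val 0 q = 0 since B lvl k kills everything
      rw [MulMemClass.coe_mul, Matrix.mul_apply]
      rw [Finset.sum_eq_zero, zero_mul]
      intro p _
      rw [hB p q (by rw [Fin.lt_def] at h; omega), mul_zero]
    · rw [C.2 h, mul_zero]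
  · intro h; exact absurd (Finset.mem_univ _) h

variable (φ : triangularSubalgebra T R n ≃ₐ[T] triangularSubalgebra T R n)
  (htri : φ '' strictlyUpper T R n = strictlyUpper T R n)

/-- diagonal entries of the images of the diagonal idempotents. -/
def cEnt (i k : Fin n) : R := (φ (E i)).val k k

variable {φ}

lemma phi_fwd_su (h : ∀ A ∈ strictlyUpper T R n, φ A ∈ strictlyUpper T R n) :
    ∀ (k : ℕ) (A : triangularSubalgebra T R n), lvl k A → lvl k (φ A) :=
  lvl_map φ.toAlgHom h

omit htri in
lemma c_orth {i j : Fin n} (h : i ≠ j) (k : Fin n) : cEnt φ i k * cEnt φ j k = 0 := by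
  rw [cEnt, cEnt, ← diag_mul, ← map_mul, E_mul_E_ne h, map_zero]
  rfl

lemma c_idem (i k : Fin n) : cEnt φ i k * cEnt φ i k = cEnt φ i k := by
  rw [cEnt, ← diag_mul, ← map_mul, E_mul_E_self]

include htri

lemma su_fwd : ∀ A ∈ strictlyUpper T R n, φ A ∈ strictlyUpper T R n := by
  intro A hA
  rw [← htri]
  exact ⟨A, hA, rfl⟩

lemma su_bwd : ∀ A ∈ strictlyUpper T R n, φ.symm A ∈ strictlyUpper T R n := by
  intro A hA
  rw [← htri] at hA
  obtain ⟨B, hB, rfl⟩ := hA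
  rwa [AlgEquiv.symm_apply_apply]

/-- The key identity: expanding `1 = (φ (φ⁻¹ E₀ₖ))` entrywise at `(0,k)`. -/
lemma key_identity (k : Fin n) :
    ∃ x : Fin n → Fin n → R,
      (1 : R) = ∑ i : Fin n, ∑ j : Fin n,
        (if (j : ℕ) = (i : ℕ) + (k : ℕ) then cEnt φ i 0 * x i j * cEnt φ j k else 0) := by
  classical
  set w := φ.symm (sing (0 : Fin n) k 1) with hw_def
  have hw : lvl (k : ℕ) w :=
    lvl_map φ.symm.toAlgHom (su_bwd htri) _ _ (lvl_sing (by simp [Fin.val_zero]) 1)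
  refine ⟨fun i j => (φ (sing i j (w.val i j))).val 0 k, ?_⟩
  have h1 : (φ w).val 0 k = 1 := by
    rw [hw_def, AlgEquiv.apply_symm_apply, sing_apply,
      if_pos ⟨rfl, rfl, Fin.zero_le k⟩]
  have hdecomp : (φ w).val 0 k
      = ∑ i : Fin n, ∑ j : Fin n, (φ (sing i j (w.val i j))).val 0 k := by
    conv_lhs => rw [eq_sum_sing w]
    rw [map_sum, AddSubmonoidClass.coe_finset_sum, Matrix.sum_apply]
    refine Finset.sum_congr rfl fun i _ => ?_
    rw [map_sum, AddSubmonoidClass.coe_finset_sum, Matrix.sum_apply]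
  rw [← h1, hdecomp]
  refine Finset.sum_congr rfl fun i _ => Finset.sum_congr rfl fun j _ => ?_
  by_cases hj : (j : ℕ) = (i : ℕ) + (k : ℕ)
  · rw [if_pos hj]
    have hij : i ≤ j := by rw [Fin.le_def]; omega
    have hlvl : lvl (k : ℕ) (φ (sing i j (w.val i j))) :=
      lvl_map φ.toAlgHom (su_fwd htri) _ _ (lvl_sing (by omega) _)
    conv_lhs => rw [show (sing i j (w.val i j) : triangularSubalgebra T R n)
        = E i * sing i j (w.val i j) * E j by
          rw [E_sandwich, sing_apply, if_pos ⟨rfl, rfl, hij⟩]]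
    rw [map_mul, map_mul, triple_apply _ _ _ _ hlvl]
    rfl
  · rw [if_neg hj]
    rcases lt_or_gt_of_ne hj with h | h
    · rw [hw i j h, sing_zero, map_zero]
      rfl
    · have hlvl : lvl ((k : ℕ) + 1) (φ (sing i j (w.val i j))) :=
        lvl_map φ.toAlgHom (su_fwd htri) _ _ (lvl_sing (by omega) _)
      exact hlvl 0 k (by simp [Fin.val_zero])

end Main

end Stmt7Aux

namespace Stmt7Aux

variable {T R : Type*} [CommRing T] [Ring R] [Algebra T R] {n : ℕ} [NeZero n]
variable {φ : triangularSubalgebra T R n ≃ₐ[T] triangularSubalgebra T R n}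
  (htri : φ '' strictlyUpper T R n = strictlyUpper T R n)

/-- the last index. -/
def lst : Fin n := ⟨n - 1, by have := NeZero.pos n; omega⟩

include htri

lemma c_zero_zero : cEnt φ 0 0 = 1 := by
  obtain ⟨x, hx⟩ := key_identity htri (lst : Fin n)
  have hcol : ∑ i : Fin n, ∑ j : Fin n,
      (if (j : ℕ) = (i : ℕ) + ((lst : Fin n) : ℕ) then cEnt φ i 0 * x i j * cEnt φ j lst else 0)
      = cEnt φ 0 0 * x 0 lst * cEnt φ lst lst := by
    rw [Finset.sum_eq_single (0 : Fin n)]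
    · rw [Finset.sum_eq_single (lst : Fin n)]
      · rw [if_pos (by simp [Fin.val_zero])]
      · intro j _ hj
        refine if_neg fun hc => hj (Fin.ext ?_)
        rw [hc, Fin.val_zero, zero_add]
      · intro h; exact absurd (Finset.mem_univ _) h
    · intro i _ hi
      refine Finset.sum_eq_zero fun j _ => if_neg fun hc => ?_
      have hi' : (i : ℕ) ≠ 0 := fun h => hi (Fin.ext (by rw [h, Fin.val_zero]))
      have hj' : (j : ℕ) < n := j.isLt
      have hl : ((lst : Fin n) : ℕ) = n - 1 := rfl
      have := NeZero.pos n
      omega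
    · intro h; exact absurd (Finset.mem_univ _) h
  rw [hcol] at hx
  calc cEnt φ 0 0 = cEnt φ 0 0 * (cEnt φ 0 0 * x 0 lst * cEnt φ lst lst) := by
        rw [← hx, mul_one]
    _ = cEnt φ 0 0 * cEnt φ 0 0 * x 0 lst * cEnt φ lst lst := by
        rw [← mul_assoc, ← mul_assoc]
    _ = cEnt φ 0 0 * x 0 lst * cEnt φ lst lst := by rw [c_idem]
    _ = 1 := hx.symm

lemma c_diag (k : Fin n) : cEnt φ k k = 1 := by
  have h0 := c_zero_zero htri
  have hoff : ∀ i : Fin n, i ≠ 0 → cEnt φ i 0 = 0 := by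
    intro i hi
    have := c_orth (φ := φ) hi (0 : Fin n)
    rwa [h0, mul_one] at this
  obtain ⟨x, hx⟩ := key_identity htri k
  have hcol : ∑ i : Fin n, ∑ j : Fin n,
      (if (j : ℕ) = (i : ℕ) + (k : ℕ) then cEnt φ i 0 * x i j * cEnt φ j k else 0)
      = x 0 k * cEnt φ k k := by
    rw [Finset.sum_eq_single (0 : Fin n)]
    · rw [Finset.sum_eq_single k]
      · rw [if_pos (by rw [Fin.val_zero, zero_add]), h0, one_mul]
      · intro j _ hj
        refine if_neg fun hc => hj (Fin.ext ?_)
        rw [hc, Fin.val_zero, zero_add]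
      · intro h; exact absurd (Finset.mem_univ _) h
    · intro i _ hi
      refine Finset.sum_eq_zero fun j _ => ?_
      by_cases hc : (j : ℕ) = (i : ℕ) + (k : ℕ)
      · rw [if_pos hc, hoff i hi, zero_mul, zero_mul]
      · exact if_neg hc
    · intro h; exact absurd (Finset.mem_univ _) h
  rw [hcol] at hx
  calc cEnt φ k k = (x 0 k * cEnt φ k k) * cEnt φ k k := by rw [← hx, one_mul]
    _ = x 0 k * (cEnt φ k k * cEnt φ k k) := by rw [mul_assoc]
    _ = x 0 k * cEnt φ k k := by rw [c_idem]
    _ = 1 := hx.symm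

lemma c_off {i k : Fin n} (h : i ≠ k) : cEnt φ i k = 0 := by
  have := c_orth (φ := φ) h k
  rwa [c_diag htri, mul_one] at this

/-- the intertwining unit candidate. -/
def uElt (φ : triangularSubalgebra T R n ≃ₐ[T] triangularSubalgebra T R n) :
    triangularSubalgebra T R n :=
  ∑ i : Fin n, φ (E i) * E i

omit htri in
lemma uElt_apply (a b : Fin n) : (uElt φ).val a b = (φ (E b)).val a b := by
  rw [uElt, AddSubmonoidClass.coe_finset_sum, Matrix.sum_apply]
  rw [Finset.sum_eq_single b]
  · rw [MulMemClass.coe_mul, E, sing_val_of_le le_rfl,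
      Matrix.mul_single_apply_same, mul_one]
  · intro i _ hi
    rw [MulMemClass.coe_mul, E, sing_val_of_le le_rfl,
      Matrix.mul_single_apply_of_ne (hbj := Ne.symm hi)]
  · intro h; exact absurd (Finset.mem_univ _) h

lemma lvl_one_sub_u : lvl 1 ((1 : triangularSubalgebra T R n) - uElt φ) := by
  intro p q hpq
  rw [AddSubgroupClass.coe_sub, Matrix.sub_apply, uElt_apply]
  by_cases hqp : q = p
  · subst hqp
    rw [OneMemClass.coe_one, Matrix.one_apply_eq]
    have : (φ (E q)).val q q = 1 := c_diag htri q
    rw [this, sub_self]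
  · have hlt : q < p := by
      rw [Fin.lt_def]
      simp only [ne_eq, Fin.ext_iff] at hqp
      omega
    rw [OneMemClass.coe_one, Matrix.one_apply_ne (fun hh => hqp hh.symm),
      (φ (E q)).2 hlt, sub_self]

omit htri in
lemma lvl_pow {m : triangularSubalgebra T R n} (hm : lvl 1 m) (k : ℕ) : lvl k (m ^ k) := by
  induction k with
  | zero => exact lvl_zero _
  | succ k ih =>
    rw [pow_succ]
    exact lvl_mul ih hm

/-- `u` as a unit. -/
noncomputable def uUnit (htri : φ '' strictlyUpper T R n = strictlyUpper T R n) :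
    (triangularSubalgebra T R n)ˣ where
  val := uElt φ
  inv := ∑ j ∈ Finset.range n, ((1 : triangularSubalgebra T R n) - uElt φ) ^ j
  val_inv := by
    set m := (1 : triangularSubalgebra T R n) - uElt φ with hm
    have hmn : m ^ n = 0 := lvl_eq_zero (lvl_pow (lvl_one_sub_u htri) n)
    have hu : uElt φ = 1 - m := by rw [hm, sub_sub_cancel]
    have h : m * (∑ j ∈ Finset.range n, m ^ j) - (∑ j ∈ Finset.range n, m ^ j)
        = m ^ n - 1 := by
      have h2 := mul_geom_sum m n
      rwa [sub_mul, one_mul] at h2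
    rw [hmn, zero_sub] at h
    have h3 := congrArg Neg.neg h
    rw [neg_sub, neg_neg] at h3
    rw [hu, sub_mul, one_mul, h3]
  inv_val := by
    set m := (1 : triangularSubalgebra T R n) - uElt φ with hm
    have hmn : m ^ n = 0 := lvl_eq_zero (lvl_pow (lvl_one_sub_u htri) n)
    have hu : uElt φ = 1 - m := by rw [hm, sub_sub_cancel]
    have h : (∑ j ∈ Finset.range n, m ^ j) * m - (∑ j ∈ Finset.range n, m ^ j)
        = m ^ n - 1 := by
      have h2 := geom_sum_mul m n
      rwa [mul_sub, mul_one] at h2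
    rw [hmn, zero_sub] at h
    have h3 := congrArg Neg.neg h
    rw [neg_sub, neg_neg] at h3
    rw [hu, mul_sub, mul_one, h3]

omit htri in
lemma phiE_mul_u (i : Fin n) : φ (E i) * uElt φ = uElt φ * E i := by
  have hl : φ (E i) * uElt φ = φ (E i) * E i := by
    rw [uElt, Finset.mul_sum]
    rw [Finset.sum_eq_single i]
    · rw [← mul_assoc, ← map_mul, E_mul_E_self]
    · intro j _ hj
      rw [← mul_assoc, ← map_mul, E_mul_E_ne (Ne.symm hj), map_zero, zero_mul]
    · intro h; exact absurd (Finset.mem_univ _) h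
  have hr : uElt φ * E i = φ (E i) * E i := by
    rw [uElt, Finset.sum_mul]
    rw [Finset.sum_eq_single i]
    · rw [mul_assoc, E_mul_E_self]
    · intro j _ hj
      rw [mul_assoc, E_mul_E_ne hj, mul_zero]
    · intro h; exact absurd (Finset.mem_univ _) h
  rw [hl, hr]

end Stmt7Aux

namespace Stmt7Aux

variable {T R : Type*} [CommRing T] [Ring R] [Algebra T R] {n : ℕ}

lemma sing_add (p q : Fin n) (r s : R) :
    (sing p q (r + s) : triangularSubalgebra T R n) = sing p q r + sing p q s := by
  apply Subtype.ext
  ext a b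
  rw [AddMemClass.coe_add, Matrix.add_apply, sing_apply, sing_apply, sing_apply]
  split_ifs <;> simp

lemma sing_smul (p q : Fin n) (t : T) (r : R) :
    t • (sing p q r : triangularSubalgebra T R n) = sing p q (t • r) := by
  apply Subtype.ext
  ext a b
  rw [SetLike.val_smul, Matrix.smul_apply, sing_apply, sing_apply]
  split_ifs <;> simp

/-- conjugation by a unit as an algebra automorphism. -/
def conjAE (v : (triangularSubalgebra T R n)ˣ) :
    triangularSubalgebra T R n ≃ₐ[T] triangularSubalgebra T R n where
  toFun x := ↑v * x * ↑v⁻¹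
  invFun x := ↑v⁻¹ * x * ↑v
  left_inv x := by
    simp only [mul_assoc, Units.inv_mul_cancel_left]
    rw [Units.inv_mul, mul_one]
  right_inv x := by
    simp only [mul_assoc, Units.mul_inv_cancel_left]
    rw [Units.mul_inv, mul_one]
  map_mul' x y := by
    simp only [mul_assoc, Units.inv_mul_cancel_left]
  map_add' x y := by
    rw [mul_add, add_mul]
  commutes' t := by
    rw [← Algebra.commutes t (↑v : triangularSubalgebra T R n), mul_assoc,
      Units.mul_inv, mul_one]

section Psi

variable (ψ : triangularSubalgebra T R n ≃ₐ[T] triangularSubalgebra T R n)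

/-- the entrywise coefficient functions of an automorphism fixing the diagonal idempotents. -/
def bet (i j : Fin n) (r : R) : R := (ψ (sing i j r)).val i j

variable {ψ}
variable (hE : ∀ i : Fin n, ψ (E i) = E i)

lemma bet_add (i j : Fin n) (r s : R) :
    bet ψ i j (r + s) = bet ψ i j r + bet ψ i j s := by
  unfold bet
  rw [sing_add, map_add, AddMemClass.coe_add, Matrix.add_apply]

include hE

lemma hE_symm : ∀ i : Fin n, ψ.symm (E i) = E i := fun i =>
  (AlgEquiv.symm_apply_eq ψ).mpr (hE i).symm

lemma psi_sing (i j : Fin n) (r : R) :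
    ψ (sing i j r) = sing i j (bet ψ i j r) := by
  by_cases hij : i ≤ j
  · have h1 : (sing i j r : triangularSubalgebra T R n) = E i * sing i j r * E j := by
      rw [E_sandwich, sing_apply, if_pos ⟨rfl, rfl, hij⟩]
    calc ψ (sing i j r) = ψ (E i * sing i j r * E j) := by rw [← h1]
      _ = E i * ψ (sing i j r) * E j := by rw [map_mul, map_mul, hE, hE]
      _ = sing i j (bet ψ i j r) := by rw [E_sandwich]; rfl
  · have h0 : (sing i j r : triangularSubalgebra T R n) = 0 := sing_of_not_le hij r
    have h0' : bet ψ i j r = 0 := by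
      rw [bet, h0, map_zero]; rfl
    rw [h0, h0', map_zero, sing_zero]

lemma bet_mul {i j l : Fin n} (hij : i ≤ j) (hjl : j ≤ l) (r s : R) :
    bet ψ i l (r * s) = bet ψ i j r * bet ψ j l s := by
  have h : (sing i l (bet ψ i l (r * s)) : triangularSubalgebra T R n)
      = sing i l (bet ψ i j r * bet ψ j l s) := by
    rw [← psi_sing hE i l (r * s), ← sing_mul_sing hij hjl, map_mul,
      psi_sing hE i j r, psi_sing hE j l s, sing_mul_sing hij hjl]
  have h2 := congrArg (fun X : triangularSubalgebra T R n => X.val i l) h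
  simpa [sing_apply, if_pos, hij.trans hjl] using h2

lemma bet_bet_symm {i j : Fin n} (hij : i ≤ j) (r : R) :
    bet ψ i j (bet ψ.symm i j r) = r := by
  have h : ψ (ψ.symm (sing i j r)) = sing i j r := ψ.apply_symm_apply _
  rw [psi_sing (hE_symm hE) i j r, psi_sing hE] at h
  have h2 := congrArg (fun X : triangularSubalgebra T R n => X.val i j) h
  simpa [sing_apply, if_pos, hij] using h2

lemma psi_val (A : triangularSubalgebra T R n) (a b : Fin n) :
    (ψ A).val a b = if a ≤ b then bet ψ a b (A.val a b) else 0 := by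
  by_cases hab : a ≤ b
  · have hre : ψ A = ∑ p : Fin n, ∑ q : Fin n, sing p q (bet ψ p q (A.val p q)) := by
      conv_lhs => rw [eq_sum_sing A]
      rw [map_sum]
      refine Finset.sum_congr rfl fun p _ => ?_
      rw [map_sum]
      exact Finset.sum_congr rfl fun q _ => psi_sing hE p q _
    rw [hre, AddSubmonoidClass.coe_finset_sum, Matrix.sum_apply, if_pos hab]
    rw [Finset.sum_eq_single a]
    · rw [AddSubmonoidClass.coe_finset_sum, Matrix.sum_apply, Finset.sum_eq_single b]
      · rw [sing_apply, if_pos ⟨rfl, rfl, hab⟩]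
      · intro q _ hq; rw [sing_apply, if_neg (by tauto)]
      · intro h; exact absurd (Finset.mem_univ _) h
    · intro p _ hp
      rw [AddSubmonoidClass.coe_finset_sum, Matrix.sum_apply]
      refine Finset.sum_eq_zero fun q _ => ?_
      rw [sing_apply, if_neg (by tauto)]
    · intro h; exact absurd (Finset.mem_univ _) h
  · rw [if_neg hab]
    exact (ψ A).2 (by rw [Fin.lt_def]; rw [Fin.le_def] at hab; omega)

section WithZero

variable [NeZero n]

lemma w_bet {i j : Fin n} (hij : i ≤ j) (r : R) :
    bet ψ 0 i 1 * bet ψ i j r = bet ψ 0 0 r * bet ψ 0 j 1 := by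
  rw [← bet_mul hE (Fin.zero_le i) hij, one_mul,
    ← bet_mul hE le_rfl (Fin.zero_le j), mul_one]

end WithZero

end Psi

section Units

variable {ψ : triangularSubalgebra T R n ≃ₐ[T] triangularSubalgebra T R n}
variable [NeZero n]

/-- the diagonal scaling coefficients, as units. -/
noncomputable def wUnit (hE : ∀ i : Fin n, ψ (E i) = E i) (i : Fin n) : Rˣ where
  val := bet ψ 0 i 1
  inv := bet ψ i i (bet ψ.symm 0 i 1)
  val_inv := by
    rw [← bet_mul hE (Fin.zero_le i) le_rfl, one_mul, bet_bet_symm hE (Fin.zero_le i)]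
  inv_val := by
    have hr : bet ψ 0 i 1 * bet ψ i i (bet ψ.symm 0 i 1) = 1 := by
      rw [← bet_mul hE (Fin.zero_le i) le_rfl, one_mul, bet_bet_symm hE (Fin.zero_le i)]
    have hl : bet ψ 0 0 (bet ψ.symm 0 i 1) * bet ψ 0 i 1 = 1 := by
      rw [← bet_mul hE le_rfl (Fin.zero_le i), mul_one, bet_bet_symm hE (Fin.zero_le i)]
    have hba : bet ψ i i (bet ψ.symm 0 i 1) = bet ψ 0 0 (bet ψ.symm 0 i 1) := by
      calc bet ψ i i (bet ψ.symm 0 i 1)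
          = (bet ψ 0 0 (bet ψ.symm 0 i 1) * bet ψ 0 i 1) * bet ψ i i (bet ψ.symm 0 i 1) := by
            rw [hl, one_mul]
        _ = bet ψ 0 0 (bet ψ.symm 0 i 1)
            * (bet ψ 0 i 1 * bet ψ i i (bet ψ.symm 0 i 1)) := by rw [mul_assoc]
        _ = bet ψ 0 0 (bet ψ.symm 0 i 1) := by rw [hr, mul_one]
    rw [hba, hl]

/-- the induced automorphism of `R`. -/
noncomputable def alphaEquiv (hE : ∀ i : Fin n, ψ (E i) = E i) : R ≃ₐ[T] R where
  toFun := bet ψ 0 0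
  invFun := bet ψ.symm 0 0
  left_inv r := by
    have h := bet_bet_symm (ψ := ψ.symm) (hE_symm hE) (le_refl (0 : Fin n)) r
    simpa only [AlgEquiv.symm_symm] using h
  right_inv r := bet_bet_symm hE le_rfl r
  map_mul' r s := bet_mul hE le_rfl le_rfl r s
  map_add' r s := bet_add 0 0 r s
  commutes' t := by
    have h1 : (sing 0 0 (algebraMap T R t) : triangularSubalgebra T R n) = t • E 0 := by
      rw [E, sing_smul, Algebra.algebraMap_eq_smul_one]
    show bet ψ 0 0 (algebraMap T R t) = algebraMap T R t
    unfold bet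
    rw [h1, map_smul, hE, SetLike.val_smul, Matrix.smul_apply, E,
      sing_val_of_le le_rfl]
    rw [Matrix.single_apply_same, Algebra.algebraMap_eq_smul_one]

/-- the diagonal matrix with given diagonal. -/
def diagElt (d : Fin n → R) : triangularSubalgebra T R n :=
  ∑ i : Fin n, (sing (T := T) i i (d i))

lemma diagElt_apply (d : Fin n → R) (a b : Fin n) :
    (diagElt (T := T) d).val a b = if a = b then d a else 0 := by
  rw [diagElt, AddSubmonoidClass.coe_finset_sum, Matrix.sum_apply]
  rw [Finset.sum_eq_single a]
  · rw [sing_apply]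
    by_cases hab : a = b
    · subst hab; simp
    · simp [hab]
  · intro i _ hi; rw [sing_apply, if_neg (by tauto)]
  · intro h; exact absurd (Finset.mem_univ _) h

lemma diagElt_mul_apply (d : Fin n → R) (A : triangularSubalgebra T R n) (a b : Fin n) :
    (diagElt d * A).val a b = d a * A.val a b := by
  rw [MulMemClass.coe_mul, Matrix.mul_apply]
  rw [Finset.sum_eq_single a]
  · rw [diagElt_apply, if_pos rfl]
  · intro p _ hp; rw [diagElt_apply, if_neg (by tauto), zero_mul]
  · intro h; exact absurd (Finset.mem_univ _) h

lemma mul_diagElt_apply (A : triangularSubalgebra T R n) (d : Fin n → R) (a b : Fin n) :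
    (A * diagElt d).val a b = A.val a b * d b := by
  rw [MulMemClass.coe_mul, Matrix.mul_apply]
  rw [Finset.sum_eq_single b]
  · rw [diagElt_apply, if_pos rfl]
  · intro p _ hp; rw [diagElt_apply, if_neg hp, mul_zero]
  · intro h; exact absurd (Finset.mem_univ _) h

lemma diagElt_mul_diagElt (d e : Fin n → R) :
    (diagElt d : triangularSubalgebra T R n) * diagElt e = diagElt (fun i => d i * e i) := by
  apply Subtype.ext
  ext a b
  rw [diagElt_mul_apply, diagElt_apply, diagElt_apply]
  by_cases hab : a = b
  · subst hab; simp
  · simp [hab]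

lemma diagElt_one : (diagElt (fun _ => (1 : R)) : triangularSubalgebra T R n) = 1 := by
  rw [diagElt]
  exact sum_E

/-- the diagonal unit. -/
noncomputable def DUnit (hE : ∀ i : Fin n, ψ (E i) = E i) :
    (triangularSubalgebra T R n)ˣ where
  val := diagElt (fun i => (wUnit hE i : R))
  inv := diagElt (fun i => (((wUnit hE i)⁻¹ : Rˣ) : R))
  val_inv := by
    rw [diagElt_mul_diagElt, show (fun i => (wUnit hE i : R) * ((wUnit hE i)⁻¹ : Rˣ))
      = fun _ => (1 : R) from funext fun i => Units.mul_inv _, diagElt_one]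
  inv_val := by
    rw [diagElt_mul_diagElt, show (fun i => (((wUnit hE i)⁻¹ : Rˣ) : R) * (wUnit hE i : R))
      = fun _ => (1 : R) from funext fun i => Units.inv_mul _, diagElt_one]

lemma psi_eq_conj_diag (hE : ∀ i : Fin n, ψ (E i) = E i) (A : triangularSubalgebra T R n) :
    ψ A = ↑(DUnit hE)⁻¹ * entrywiseMap T R n (alphaEquiv hE) A * ↑(DUnit hE) := by
  apply Subtype.ext
  ext a b
  have hent : (entrywiseMap T R n (alphaEquiv hE) A).val a b
      = bet ψ 0 0 (A.val a b) := rfl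
  have hR : (↑(DUnit hE)⁻¹ * entrywiseMap T R n (alphaEquiv hE) A * ↑(DUnit hE)
      : triangularSubalgebra T R n).val a b
      = (((wUnit hE a)⁻¹ : Rˣ) : R) * bet ψ 0 0 (A.val a b) * (wUnit hE b : R) := by
    rw [show (↑(DUnit hE) : triangularSubalgebra T R n)
        = diagElt (fun i => (wUnit hE i : R)) from rfl,
      mul_diagElt_apply,
      show (↑(DUnit hE)⁻¹ : triangularSubalgebra T R n)
        = diagElt (fun i => (((wUnit hE i)⁻¹ : Rˣ) : R)) from rfl,
      diagElt_mul_apply, hent]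
  rw [hR, psi_val hE]
  by_cases hab : a ≤ b
  · rw [if_pos hab]
    have hw := w_bet hE hab (A.val a b)
    calc bet ψ a b (A.val a b)
        = (((wUnit hE a)⁻¹ : Rˣ) : R) * ((wUnit hE a : R) * bet ψ a b (A.val a b)) := by
          rw [← mul_assoc, Units.inv_mul, one_mul]
      _ = (((wUnit hE a)⁻¹ : Rˣ) : R) * (bet ψ 0 0 (A.val a b) * (wUnit hE b : R)) := by
          rw [show (wUnit hE a : R) * bet ψ a b (A.val a b)
            = bet ψ 0 0 (A.val a b) * (wUnit hE b : R) from hw]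
      _ = (((wUnit hE a)⁻¹ : Rˣ) : R) * bet ψ 0 0 (A.val a b) * (wUnit hE b : R) := by
          rw [mul_assoc]
  · rw [if_neg hab]
    rw [A.2 (by rw [Fin.lt_def]; rw [Fin.le_def] at hab; omega)]
    rw [show bet ψ 0 0 (0 : R) = 0 from by rw [bet, sing_zero, map_zero]; rfl,
      mul_zero, zero_mul]

end Units

end Stmt7Aux

/-- Every triangular automorphism of the upper triangular matrix algebra `T(n,R)` is a
product of an inner automorphism and a ring automorphism (one induced entrywise by an
automorphism of `R`). -/
theorem stmt7 (T R : Type*) [CommRing T] [Ring R] [Algebra T R] (n : ℕ) (hn : 1 ≤ n)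
    (φ : triangularSubalgebra T R n ≃ₐ[T] triangularSubalgebra T R n)
    (htri : φ '' strictlyUpper T R n = strictlyUpper T R n) :
    ∃ (u : (triangularSubalgebra T R n)ˣ) (α : R ≃ₐ[T] R),
      ∀ A : triangularSubalgebra T R n,
        φ A = ↑u * entrywiseMap T R n α A * ↑u⁻¹ := by
  haveI : NeZero n := ⟨by omega⟩
  classical
  set uu := Stmt7Aux.uUnit htri with huu
  set ψ := φ.trans (Stmt7Aux.conjAE uu⁻¹) with hψdef
  have hψ_apply : ∀ A, ψ A = ↑uu⁻¹ * φ A * ↑uu := by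
    intro A
    show (↑uu⁻¹ : triangularSubalgebra T R n) * φ A * ↑uu⁻¹⁻¹ = ↑uu⁻¹ * φ A * ↑uu
    rw [inv_inv]
  have hE : ∀ i : Fin n, ψ (Stmt7Aux.E i) = Stmt7Aux.E i := by
    intro i
    rw [hψ_apply]
    have hcu : φ (Stmt7Aux.E i) * (↑uu : triangularSubalgebra T R n)
        = (↑uu : triangularSubalgebra T R n) * Stmt7Aux.E i := by
      rw [show (↑uu : triangularSubalgebra T R n) = Stmt7Aux.uElt φ from rfl]
      exact Stmt7Aux.phiE_mul_u i
    rw [mul_assoc, hcu, Units.inv_mul_cancel_left]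
  refine ⟨uu * (Stmt7Aux.DUnit hE)⁻¹, Stmt7Aux.alphaEquiv hE, fun A => ?_⟩
  have h1 : ψ A = ↑(Stmt7Aux.DUnit hE)⁻¹
      * entrywiseMap T R n (Stmt7Aux.alphaEquiv hE) A * ↑(Stmt7Aux.DUnit hE) :=
    Stmt7Aux.psi_eq_conj_diag hE A
  have h2 : φ A = ↑uu * ψ A * ↑uu⁻¹ := by
    rw [hψ_apply]
    simp only [mul_assoc, Units.mul_inv_cancel_left]
    rw [Units.mul_inv, mul_one]
  rw [h2, h1, Units.val_mul, mul_inv_rev, Units.val_mul, inv_inv]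
  simp only [mul_assoc]
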